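/- Let Σ ∈ ℝ^{p×p} be symmetric positive definite, let D ∈ ℝ^{p×p} be a diagonal matrix such that G = [[Σ, Σ − D], [Σ − D, Σ]] is symmetric positive semidefinite, and let (X, X̃) ∼ N(0, G) be a Gaussian vector in ℝ^{2p}. Then for every subset S ⊆ {1,...,p}, the swapped vector Π_S(X, X̃) has the same distribution N(0, G), where Π_S is the permutation on ℝ^{2p} that exchanges coordinate j with coordinate j+p for every j ∈ S; i.e., (X, X̃) satisfies the knockoff exchangeability property. -/

import Mathlib

open Matrix MeasureTheory ProbabilityTheory

/-- The coordinate permutation on `ℝ^{2p}` (indexed by `Fin p ⊕ Fin p`, where `Sum.inl j`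
is coordinate `j` and `Sum.inr j` is coordinate `j + p`) that swaps the `j`-th and
`(j+p)`-th coordinates for every `j ∈ S` and fixes all other coordinates. -/
def swapFun {p : ℕ} (S : Finset (Fin p)) : (Fin p ⊕ Fin p) → (Fin p ⊕ Fin p)
  | Sum.inl j => if j ∈ S then Sum.inr j else Sum.inl j
  | Sum.inr j => if j ∈ S then Sum.inl j else Sum.inr j

/-- The positive semidefinite square root of a positive semidefinite matrix
(removed from Mathlib; restored with its old definition). -/
noncomputable def Matrix.PosSemidef.sqrt {n : Type*} [Fintype n] [DecidableEq n]
    {A : Matrix n n ℝ} (hA : A.PosSemidef) : Matrix n n ℝ :=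
  hA.1.eigenvectorUnitary.1 * diagonal ((↑) ∘ (√·) ∘ hA.1.eigenvalues) *
  (star hA.1.eigenvectorUnitary : Matrix n n ℝ)

/-- The standard Gaussian measure `N(0, I)` on `ι → ℝ`. -/
noncomputable def stdGaussian (ι : Type*) [Fintype ι] : Measure (ι → ℝ) :=
  Measure.pi fun _ : ι => gaussianReal 0 1

/-- The centered Gaussian measure `N(0, V)` on `ι → ℝ` with covariance the symmetric
positive semidefinite matrix `V`, realized as the pushforward of the standard Gaussian
under multiplication by the symmetric PSD square root `V^{1/2}`. -/
noncomputable def gaussianVec {ι : Type*} [Fintype ι] [DecidableEq ι]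
    {V : Matrix ι ι ℝ} (hV : V.PosSemidef) : Measure (ι → ℝ) :=
  (stdGaussian ι).map fun z => hV.sqrt *ᵥ z

lemma Matrix.PosSemidef.sqrt_eq_cfc {n : Type*} [Fintype n] [DecidableEq n]
    {A : Matrix n n ℝ} (hA : A.PosSemidef) : hA.sqrt = cfc Real.sqrt A := by
  rw [hA.1.cfc_eq]
  simp [Matrix.IsHermitian.cfc, Matrix.PosSemidef.sqrt, Unitary.conjStarAlgAut_apply, Function.comp_def]

lemma swapFun_involutive {p : ℕ} (S : Finset (Fin p)) :
    Function.Involutive (swapFun S) := by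
  intro x
  cases x with
  | inl j => by_cases h : j ∈ S <;> simp [swapFun, h]
  | inr j => by_cases h : j ∈ S <;> simp [swapFun, h]

/-- The swap as an equivalence. -/
def swapEquiv {p : ℕ} (S : Finset (Fin p)) : (Fin p ⊕ Fin p) ≃ (Fin p ⊕ Fin p) :=
  ⟨swapFun S, swapFun S, swapFun_involutive S, swapFun_involutive S⟩

lemma swapFun_eq_iff {p : ℕ} (S : Finset (Fin p)) (i j : Fin p ⊕ Fin p) :
    swapFun S i = j ↔ swapFun S j = i := by
  constructor <;> intro h <;>
    simpa [swapFun_involutive S _] using (congrArg (swapFun S) h.symm)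

/-- The permutation matrix of the swap. -/
def swapMatrix {p : ℕ} (S : Finset (Fin p)) : Matrix (Fin p ⊕ Fin p) (Fin p ⊕ Fin p) ℝ :=
  Matrix.of fun i j => if swapFun S i = j then 1 else 0

lemma swapMatrix_mulVec {p : ℕ} (S : Finset (Fin p)) (x : (Fin p ⊕ Fin p) → ℝ) :
    swapMatrix S *ᵥ x = x ∘ swapFun S := by
  funext i
  simp [swapMatrix, mulVec, dotProduct, ite_mul, Finset.sum_ite_eq]

lemma swapMatrix_transpose {p : ℕ} (S : Finset (Fin p)) :
    (swapMatrix S)ᵀ = swapMatrix S := by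
  ext i j
  simp only [transpose_apply, swapMatrix, Matrix.of_apply]
  by_cases h : swapFun S i = j
  · rw [if_pos h, if_pos ((swapFun_eq_iff S i j).mp h)]
  · rw [if_neg h, if_neg (fun hh => h ((swapFun_eq_iff S j i).mp hh))]

lemma swapMatrix_mul {p : ℕ} (S : Finset (Fin p))
    (A : Matrix (Fin p ⊕ Fin p) (Fin p ⊕ Fin p) ℝ) :
    swapMatrix S * A = Matrix.of fun i j => A (swapFun S i) j := by
  ext i j
  simp [swapMatrix, Matrix.mul_apply, ite_mul, Finset.sum_ite_eq]

lemma mul_swapMatrix {p : ℕ} (S : Finset (Fin p))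
    (A : Matrix (Fin p ⊕ Fin p) (Fin p ⊕ Fin p) ℝ) :
    A * swapMatrix S = Matrix.of fun i j => A i (swapFun S j) := by
  have h : A * swapMatrix S = (swapMatrix S * Aᵀ)ᵀ := by
    rw [transpose_mul, transpose_transpose, swapMatrix_transpose]
  rw [h, swapMatrix_mul]
  ext i j
  simp

lemma swapMatrix_mul_self {p : ℕ} (S : Finset (Fin p)) :
    swapMatrix S * swapMatrix S = 1 := by
  rw [swapMatrix_mul]
  ext i j
  simp [swapMatrix, swapFun_involutive S i, Matrix.one_apply]

lemma swap_conj_G {p : ℕ} (S : Finset (Fin p)) (Sg : Matrix (Fin p) (Fin p) ℝ)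
    (dvec : Fin p → ℝ) :
    swapMatrix S * (Matrix.fromBlocks Sg (Sg - Matrix.diagonal dvec)
      (Sg - Matrix.diagonal dvec) Sg) * swapMatrix S =
    Matrix.fromBlocks Sg (Sg - Matrix.diagonal dvec) (Sg - Matrix.diagonal dvec) Sg := by
  rw [swapMatrix_mul, mul_swapMatrix]
  ext i j
  have key : ∀ a b : Fin p, a ∈ S → b ∉ S → (Sg - Matrix.diagonal dvec) a b = Sg a b := by
    intro a b ha hb
    have : a ≠ b := fun h => hb (h ▸ ha)
    simp [Matrix.diagonal_apply_ne _ this]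
  have key' : ∀ a b : Fin p, a ∉ S → b ∈ S → (Sg - Matrix.diagonal dvec) a b = Sg a b := by
    intro a b ha hb
    have : a ≠ b := fun h => ha (h ▸ hb)
    simp [Matrix.diagonal_apply_ne _ this]
  cases i with
  | inl a =>
    cases j with
    | inl b =>
      by_cases ha : a ∈ S <;> by_cases hb : b ∈ S <;>
        simp [swapFun, ha, hb, key a b, key' a b]
    | inr b =>
      by_cases ha : a ∈ S <;> by_cases hb : b ∈ S <;>
        simp [swapFun, ha, hb, key a b, key' a b]
  | inr a =>
    cases j with
    | inl b =>
      by_cases ha : a ∈ S <;> by_cases hb : b ∈ S <;>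
        simp [swapFun, ha, hb, key a b, key' a b]
    | inr b =>
      by_cases ha : a ∈ S <;> by_cases hb : b ∈ S <;>
        simp [swapFun, ha, hb, key a b, key' a b]

lemma measurable_comp_swap {p : ℕ} (S : Finset (Fin p)) :
    Measurable fun x : (Fin p ⊕ Fin p) → ℝ => x ∘ swapFun S :=
  measurable_pi_lambda _ fun i => measurable_pi_apply (swapFun S i)

lemma measurable_mulVec {ι : Type*} [Fintype ι] [DecidableEq ι]
    (A : Matrix ι ι ℝ) : Measurable fun z : ι → ℝ => A *ᵥ z := by
  refine measurable_pi_lambda _ fun i => ?_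
  simp only [mulVec, dotProduct]
  exact Finset.measurable_sum _ fun j _ => (measurable_pi_apply j).const_mul _

lemma stdGaussian_comp_swap {p : ℕ} (S : Finset (Fin p)) :
    (stdGaussian (Fin p ⊕ Fin p)).map (fun x => x ∘ swapFun S) =
      stdGaussian (Fin p ⊕ Fin p) := by
  have h := MeasureTheory.measurePreserving_piCongrLeft
    (fun _ : Fin p ⊕ Fin p => gaussianReal 0 1) (swapEquiv S)
  have heq : ⇑(MeasurableEquiv.piCongrLeft (fun _ : Fin p ⊕ Fin p => ℝ) (swapEquiv S)) =
      fun x => x ∘ swapFun S := by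
    funext x j
    have h2 := MeasurableEquiv.piCongrLeft_apply_apply
      (β := fun _ : Fin p ⊕ Fin p => ℝ) (swapEquiv S) x (swapFun S j)
    have h3 : swapEquiv S (swapFun S j) = j := swapFun_involutive S j
    rw [h3] at h2
    exact h2
  have := h.map_eq
  rw [heq] at this
  exact this

/-- **Knockoff exchangeability.** Let `Σ` be symmetric positive definite and `D` a
diagonal matrix with `G = [[Σ, Σ − D], [Σ − D, Σ]]` positive semidefinite. If
`(X, X̃) ∼ N(0, G)` then for every `S ⊆ {1,…,p}` the swapped vector `Π_S (X, X̃)` has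
the same distribution `N(0, G)`. -/
theorem stmt_19 (p : ℕ) (Sg : Matrix (Fin p) (Fin p) ℝ) (hSg : Sg.PosDef)
    (dvec : Fin p → ℝ)
    (hG : (Matrix.fromBlocks Sg (Sg - Matrix.diagonal dvec)
      (Sg - Matrix.diagonal dvec) Sg).PosSemidef)
    {Ω : Type*} [MeasurableSpace Ω] (μ : Measure Ω) [IsProbabilityMeasure μ]
    (W : Ω → (Fin p ⊕ Fin p) → ℝ) (hW : Measurable W)
    (hWlaw : Measure.map W μ = gaussianVec hG) (S : Finset (Fin p)) :
    Measure.map (fun ω => W ω ∘ swapFun S) μ = gaussianVec hG := by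
  have hPmT : (swapMatrix S)ᴴ = swapMatrix S := by
    rw [conjTranspose_eq_transpose_of_trivial]
    exact swapMatrix_transpose S
  have h1 : swapMatrix S * swapMatrix S = 1 := swapMatrix_mul_self S
  -- the swap matrix commutes with the square root
  have hGc : Commute (Matrix.fromBlocks Sg (Sg - Matrix.diagonal dvec)
      (Sg - Matrix.diagonal dvec) Sg) (swapMatrix S) := by
    have e := swap_conj_G S Sg dvec
    show _ * _ = _ * _
    calc Matrix.fromBlocks Sg (Sg - Matrix.diagonal dvec) (Sg - Matrix.diagonal dvec) Sg
          * swapMatrix S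
        = (swapMatrix S * (Matrix.fromBlocks Sg (Sg - Matrix.diagonal dvec)
            (Sg - Matrix.diagonal dvec) Sg) * swapMatrix S) * swapMatrix S := by rw [e]
      _ = swapMatrix S * (Matrix.fromBlocks Sg (Sg - Matrix.diagonal dvec)
            (Sg - Matrix.diagonal dvec) Sg) * (swapMatrix S * swapMatrix S) := by
          simp only [mul_assoc]
      _ = _ := by rw [h1, mul_one]
  have hPmQ : swapMatrix S * hG.sqrt = hG.sqrt * swapMatrix S := by
    rw [hG.sqrt_eq_cfc]
    exact (hGc.cfc_real Real.sqrt).eq.symm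
  -- rewrite the map as a composition
  have hcomp : (fun ω => W ω ∘ swapFun S) = (fun x => x ∘ swapFun S) ∘ W := rfl
  rw [hcomp, ← Measure.map_map (measurable_comp_swap S) hW, hWlaw]
  -- invariance of the Gaussian vector measure
  rw [gaussianVec, Measure.map_map (measurable_comp_swap S) (measurable_mulVec hG.sqrt)]
  have hfun : ((fun x => x ∘ swapFun S) ∘ fun z => hG.sqrt *ᵥ z) =
      (fun z => hG.sqrt *ᵥ z) ∘ (fun x => x ∘ swapFun S) := by
    funext z
    simp only [Function.comp_apply]
    rw [← swapMatrix_mulVec S (hG.sqrt *ᵥ z), ← swapMatrix_mulVec S z,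
      mulVec_mulVec, mulVec_mulVec, hPmQ]
  rw [hfun, ← Measure.map_map (measurable_mulVec hG.sqrt) (measurable_comp_swap S),
    stdGaussian_comp_swap S]
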